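/- Fix n ≥ 3 (or n = 2 with 2 invertible in o) and a commutative ring o. With b_m ⊆ sl_n(o) the filtration by super-diagonals as above, for every m ∈ ℤ with m ≥ 1-n one has the equality [b_1, b_m] = b_{m+1}; moreover [b_0, sl_n(o)] = sl_n(o). -/

import Mathlib

open Matrix

/-- The `o`-submodule `b_m` of `sl_n(o)`: trace-zero `n × n` matrices `(x_{ij})` with
`x_{ij} = 0` whenever `j - i < m`.  (So `b_m = sl_n(o)` for `m ≤ 1 - n` and `b_m = 0`
for `m ≥ n`.) -/
def slnFiltration (o : Type*) [CommRing o] (n : ℕ) (m : ℤ) :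
    Submodule o (Matrix (Fin n) (Fin n) o) where
  carrier := {X | Matrix.trace X = 0 ∧ ∀ i j : Fin n, (j : ℤ) - (i : ℤ) < m → X i j = 0}
  add_mem' := by
    rintro X Y ⟨hX, hX'⟩ ⟨hY, hY'⟩
    refine ⟨by rw [Matrix.trace_add, hX, hY, add_zero], fun i j h => ?_⟩
    simp [Matrix.add_apply, hX' i j h, hY' i j h]
  zero_mem' := ⟨by simp, fun i j _ => rfl⟩
  smul_mem' := by
    rintro c X ⟨hX, hX'⟩
    exact ⟨by rw [Matrix.trace_smul, hX, smul_zero], fun i j h => by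
      simp [Matrix.smul_apply, hX' i j h]⟩

namespace SlnAux

variable {o : Type*} [CommRing o] {n : ℕ}

lemma stdBasis_mem {m : ℤ} {i j : Fin n} (hij : i ≠ j) (h : m ≤ (j : ℤ) - (i : ℤ)) :
    single i j (1 : o) ∈ slnFiltration o n m := by
  refine ⟨Matrix.trace_single_eq_of_ne _ _ _ hij, fun a b hab => ?_⟩
  apply Matrix.single_apply_of_ne
  rintro ⟨rfl, rfl⟩
  omega

lemma diagdiff_mem {m : ℤ} (h : m ≤ 0) (i k : Fin n) :
    single i i (1 : o) - single k k 1 ∈ slnFiltration o n m := by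
  refine ⟨?_, fun a b hab => ?_⟩
  · rw [Matrix.trace_sub, Matrix.trace_single_eq_same, Matrix.trace_single_eq_same,
      sub_self]
  · have hab' : a ≠ b := by rintro rfl; omega
    rw [Matrix.sub_apply,
      Matrix.single_apply_of_ne i i 1 a b (fun h' => hab' (h'.1.symm.trans h'.2)),
      Matrix.single_apply_of_ne k k 1 a b (fun h' => hab' (h'.1.symm.trans h'.2)),
      sub_zero]

lemma bracket_mem_filtration {a c : ℤ} {X Y : Matrix (Fin n) (Fin n) o}
    (hX : X ∈ slnFiltration o n a) (hY : Y ∈ slnFiltration o n c) :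
    X * Y - Y * X ∈ slnFiltration o n (a + c) := by
  obtain ⟨-, hX'⟩ := hX
  obtain ⟨-, hY'⟩ := hY
  refine ⟨by rw [Matrix.trace_sub, Matrix.trace_mul_comm, sub_self], fun i j hij => ?_⟩
  have h1 : (X * Y) i j = 0 := by
    rw [Matrix.mul_apply]
    refine Finset.sum_eq_zero fun k _ => ?_
    by_cases h : (k : ℤ) - (i : ℤ) < a
    · rw [hX' i k h, zero_mul]
    · rw [hY' k j (by omega), mul_zero]
  have h2 : (Y * X) i j = 0 := by
    rw [Matrix.mul_apply]
    refine Finset.sum_eq_zero fun k _ => ?_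
    by_cases h : (k : ℤ) - (i : ℤ) < c
    · rw [hY' i k h, zero_mul]
    · rw [hX' k j (by omega), mul_zero]
  rw [Matrix.sub_apply, h1, h2, sub_zero]

lemma comm1 (i j k : Fin n) (hki : k ≠ i) :
    single i j (1 : o) * single j k 1
      - single j k 1 * single i j 1 = single i k 1 := by
  rw [Matrix.single_mul_single_same, Matrix.single_mul_single_of_ne (h := hki), mul_one,
    sub_zero]

lemma comm2 (i j k : Fin n) (hji : j ≠ i) (hjk : j ≠ k) (hki : k ≠ i) :
    single i j (1 : o) * (single j j 1 - single k k 1)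
      - (single j j 1 - single k k 1) * single i j 1
      = single i j 1 := by
  rw [mul_sub, sub_mul, Matrix.single_mul_single_same,
    Matrix.single_mul_single_of_ne (h := hjk), Matrix.single_mul_single_of_ne (h := hji),
    Matrix.single_mul_single_of_ne (h := hki), mul_one]
  abel

lemma comm3 (i j : Fin n) (hij : i ≠ j) :
    single i j (1 : o) * (single j j 1 - single i i 1)
      - (single j j 1 - single i i 1) * single i j 1
      = (2 : o) • single i j 1 := by
  rw [mul_sub, sub_mul, Matrix.single_mul_single_same,
    Matrix.single_mul_single_of_ne (h := hij.symm),
    Matrix.single_mul_single_of_ne (h := hij.symm), Matrix.single_mul_single_same,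
    mul_one, two_smul]
  abel

lemma comm4 (i j : Fin n) :
    single i j (1 : o) * single j i 1
      - single j i 1 * single i j 1
      = single i i 1 - single j j 1 := by
  rw [Matrix.single_mul_single_same, Matrix.single_mul_single_same, mul_one]

lemma comm5 (i j k : Fin n) (hji : j ≠ i) (hki : k ≠ i) (hjk : j ≠ k) :
    (single i i (1 : o) - single k k 1) * single i j 1
      - single i j 1 * (single i i 1 - single k k 1)
      = single i j 1 := by
  rw [mul_sub, sub_mul, Matrix.single_mul_single_same,
    Matrix.single_mul_single_of_ne (h := hki), Matrix.single_mul_single_of_ne (h := hji),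
    Matrix.single_mul_single_of_ne (h := hjk), one_mul]
  abel

lemma comm6 (i j : Fin n) (hij : i ≠ j) :
    (single i i (1 : o) - single j j 1) * single i j 1
      - single i j 1 * (single i i 1 - single j j 1)
      = (2 : o) • single i j 1 := by
  rw [mul_sub, sub_mul, Matrix.single_mul_single_same,
    Matrix.single_mul_single_of_ne (h := hij.symm),
    Matrix.single_mul_single_of_ne (h := hij.symm), Matrix.single_mul_single_same,
    mul_one, two_smul]
  abel


lemma exists_third (h3 : 3 ≤ n) (i j : Fin n) : ∃ k : Fin n, k ≠ i ∧ k ≠ j := by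
  have h1 : ({i, j}ᶜ : Finset (Fin n)).Nonempty := by
    rw [← Finset.card_pos, Finset.card_compl]
    have h2 : ({i, j} : Finset (Fin n)).card ≤ 2 :=
      (Finset.card_insert_le i {j}).trans (by simp)
    have : Fintype.card (Fin n) = n := Fintype.card_fin n
    omega
  obtain ⟨k, hk⟩ := h1
  simp only [Finset.mem_compl, Finset.mem_insert, Finset.mem_singleton, not_or] at hk
  exact ⟨k, hk.1, hk.2⟩

lemma mem_of_pieces {p : Submodule o (Matrix (Fin n) (Fin n) o)} (hn0 : 0 < n)
    {X : Matrix (Fin n) (Fin n) o} (htr : Matrix.trace X = 0)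
    (hE : ∀ i j : Fin n, i ≠ j → X i j ≠ 0 → single i j (1 : o) ∈ p)
    (hD : ∀ i : Fin n, X i i ≠ 0 →
      single i i (1 : o) - single (⟨0, hn0⟩ : Fin n) (⟨0, hn0⟩ : Fin n) 1 ∈ p) :
    X ∈ p := by
  have key : X = ∑ i : Fin n, ∑ j : Fin n, X i j •
      (single i j (1 : o) -
        if i = j then single (⟨0, hn0⟩ : Fin n) (⟨0, hn0⟩ : Fin n) 1 else 0) := by
    have h2 : ∑ i : Fin n, ∑ j : Fin n, X i j •
        (if i = j then single (⟨0, hn0⟩ : Fin n) (⟨0, hn0⟩ : Fin n) (1 : o) else 0) = 0 := by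
      have h3 : ∀ i : Fin n, (∑ j : Fin n, X i j •
          (if i = j then single (⟨0, hn0⟩ : Fin n) (⟨0, hn0⟩ : Fin n) (1 : o) else 0))
          = X i i • single (⟨0, hn0⟩ : Fin n) (⟨0, hn0⟩ : Fin n) (1 : o) := by
        intro i
        rw [Finset.sum_eq_single i]
        · rw [if_pos rfl]
        · intro b _ hb
          rw [if_neg (Ne.symm hb), smul_zero]
        · intro h; exact absurd (Finset.mem_univ i) h
      rw [Finset.sum_congr rfl fun i _ => h3 i, ← Finset.sum_smul]
      have h4 : ∑ i : Fin n, X i i = Matrix.trace X := rfl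
      rw [h4, htr, zero_smul]
    simp only [smul_sub, Finset.sum_sub_distrib]
    rw [h2, sub_zero]
    conv_lhs => rw [matrix_eq_sum_single X]
    refine Finset.sum_congr rfl fun i _ => Finset.sum_congr rfl fun j _ => ?_
    rw [smul_single, smul_eq_mul, mul_one]
  rw [key]
  refine Submodule.sum_mem _ fun i _ => Submodule.sum_mem _ fun j _ => ?_
  by_cases hx : X i j = 0
  · rw [hx, zero_smul]; exact p.zero_mem
  refine Submodule.smul_mem _ _ ?_
  by_cases hij : i = j
  · subst hij
    rw [if_pos rfl]
    exact hD i hx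
  · rw [if_neg hij, sub_zero]
    exact hE i j hij hx

lemma bracket_mem_span {a c : ℤ} {X Y : Matrix (Fin n) (Fin n) o}
    (hX : X ∈ slnFiltration o n a) (hY : Y ∈ slnFiltration o n c) :
    X * Y - Y * X ∈ Submodule.span o {z : Matrix (Fin n) (Fin n) o |
      ∃ X ∈ slnFiltration o n a, ∃ Y ∈ slnFiltration o n c, z = X * Y - Y * X} :=
  Submodule.subset_span ⟨X, hX, Y, hY, rfl⟩

lemma diag_chain_mem {a c : ℤ} (hn0 : 0 < n) (ha : a ≤ 1) (hc : c ≤ -1)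
    (k : ℕ) (hk : k < n) :
    single (⟨k, hk⟩ : Fin n) (⟨k, hk⟩ : Fin n) (1 : o)
      - single (⟨0, hn0⟩ : Fin n) (⟨0, hn0⟩ : Fin n) 1 ∈
      Submodule.span o {z : Matrix (Fin n) (Fin n) o |
        ∃ X ∈ slnFiltration o n a, ∃ Y ∈ slnFiltration o n c, z = X * Y - Y * X} := by
  induction k with
  | zero => rw [sub_self]; exact Submodule.zero_mem _
  | succ k ih =>
    have hk' : k < n := by omega
    have hH : single (⟨k, hk'⟩ : Fin n) (⟨k, hk'⟩ : Fin n) (1 : o)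
        - single (⟨k + 1, hk⟩ : Fin n) (⟨k + 1, hk⟩ : Fin n) 1 ∈
        Submodule.span o {z : Matrix (Fin n) (Fin n) o |
          ∃ X ∈ slnFiltration o n a, ∃ Y ∈ slnFiltration o n c, z = X * Y - Y * X} := by
      rw [← comm4 (⟨k, hk'⟩ : Fin n) (⟨k + 1, hk⟩ : Fin n)]
      refine bracket_mem_span ?_ ?_
      · exact stdBasis_mem (by simp only [ne_eq, Fin.mk.injEq]; omega)
          (by simp only [Fin.val_mk]; omega)
      · exact stdBasis_mem (by simp only [ne_eq, Fin.mk.injEq]; omega)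
          (by simp only [Fin.val_mk]; omega)
    have heq : single (⟨k + 1, hk⟩ : Fin n) (⟨k + 1, hk⟩ : Fin n) (1 : o)
        - single (⟨0, hn0⟩ : Fin n) (⟨0, hn0⟩ : Fin n) 1
        = (single (⟨k, hk'⟩ : Fin n) (⟨k, hk'⟩ : Fin n) 1
            - single (⟨0, hn0⟩ : Fin n) (⟨0, hn0⟩ : Fin n) 1)
          - (single (⟨k, hk'⟩ : Fin n) (⟨k, hk'⟩ : Fin n) 1
            - single (⟨k + 1, hk⟩ : Fin n) (⟨k + 1, hk⟩ : Fin n) 1) := by abel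
    rw [heq]
    exact Submodule.sub_mem _ (ih hk') hH

end SlnAux


/-- **Bracket identities for the super-diagonal filtration of `sl_n`.**
Suppose `n ≥ 3`, or `n = 2` and `2` is invertible in `o`.  Then for every `m ≥ 1 - n`
one has `[b_1, b_m] = b_{m+1}` (as `o`-submodules, the left side being the span of
brackets), and moreover `[b_0, sl_n(o)] = sl_n(o)`, where `sl_n(o) = b_{1-n}`. -/
theorem slnFiltration_bracket
    (o : Type*) [CommRing o] (n : ℕ)
    (hn : 3 ≤ n ∨ (n = 2 ∧ IsUnit (2 : o))) :
    (∀ m : ℤ, 1 - (n : ℤ) ≤ m →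
      Submodule.span o {z : Matrix (Fin n) (Fin n) o |
          ∃ X ∈ slnFiltration o n 1, ∃ Y ∈ slnFiltration o n m, z = X * Y - Y * X}
        = slnFiltration o n (m + 1)) ∧
    Submodule.span o {z : Matrix (Fin n) (Fin n) o |
        ∃ X ∈ slnFiltration o n 0, ∃ Y ∈ slnFiltration o n (1 - (n : ℤ)), z = X * Y - Y * X}
      = slnFiltration o n (1 - (n : ℤ)) := by
  have hn2 : 2 ≤ n := by rcases hn with h | ⟨h, -⟩ <;> omega
  have hn0 : 0 < n := by omega
  constructor
  · intro m hm
    apply le_antisymm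
    · rw [Submodule.span_le]
      rintro z ⟨X, hX, Y, hY, rfl⟩
      have h := SlnAux.bracket_mem_filtration hX hY
      rwa [show (1 : ℤ) + m = m + 1 by ring] at h
    · intro X hX
      obtain ⟨htr, hX'⟩ := hX
      refine SlnAux.mem_of_pieces hn0 htr ?_ ?_
      · intro i j hij hXij
        have hge : m + 1 ≤ (j : ℤ) - (i : ℤ) := by
          by_contra h
          exact hXij (hX' i j (by omega))
        have hiv : (i : ℕ) < n := i.isLt
        have hjv : (j : ℕ) < n := j.isLt
        have hijv : (i : ℕ) ≠ (j : ℕ) := fun h => hij (Fin.ext h)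
        by_cases hB : (j : ℕ) = (i : ℕ) + 1
        · -- superdiagonal entry
          have hm0 : m ≤ 0 := by omega
          rcases hn with h3 | ⟨h2, hu⟩
          · obtain ⟨k, hki, hkj⟩ := SlnAux.exists_third h3 i j
            rw [← SlnAux.comm2 i j k (Ne.symm hij) (Ne.symm hkj) hki]
            exact SlnAux.bracket_mem_span (SlnAux.stdBasis_mem hij (by omega))
              (SlnAux.diagdiff_mem hm0 j k)
          · obtain ⟨u, hu⟩ := hu
            have h2' : single i j (1 : o) = (↑u⁻¹ : o) •
                (single i j (1 : o) *
                    (single j j 1 - single i i 1)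
                  - (single j j 1 - single i i 1) *
                    single i j 1) := by
              rw [SlnAux.comm3 i j hij, smul_smul, ← hu, Units.inv_mul, one_smul]
            rw [h2']
            exact Submodule.smul_mem _ _
              (SlnAux.bracket_mem_span (SlnAux.stdBasis_mem hij (by omega))
                (SlnAux.diagdiff_mem hm0 j i))
        · by_cases hC : (i : ℕ) + 1 < n
          · have hne1 : i ≠ (⟨(i : ℕ) + 1, hC⟩ : Fin n) := by
              simp only [ne_eq, Fin.ext_iff, Fin.val_mk]; omega
            have hne2 : (⟨(i : ℕ) + 1, hC⟩ : Fin n) ≠ j := by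
              simp only [ne_eq, Fin.ext_iff, Fin.val_mk]; omega
            rw [← SlnAux.comm1 i (⟨(i : ℕ) + 1, hC⟩ : Fin n) j (Ne.symm hij)]
            exact SlnAux.bracket_mem_span
              (SlnAux.stdBasis_mem hne1 (by simp only [Fin.val_mk]; omega))
              (SlnAux.stdBasis_mem hne2 (by simp only [Fin.val_mk]; omega))
          · have hj1 : 1 ≤ (j : ℕ) := by omega
            set t : Fin n := ⟨(j : ℕ) - 1, by omega⟩ with ht
            have htv : (t : ℕ) = (j : ℕ) - 1 := rfl
            have h1 : t ≠ j := by
              simp only [ne_eq, Fin.ext_iff, htv]; omega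
            have h2 : i ≠ t := by
              simp only [ne_eq, Fin.ext_iff, htv]; omega
            have hneg : single t j (1 : o) * single i t 1
                - single i t 1 * single t j 1
                = -(single i j 1) := by
              rw [← SlnAux.comm1 i t j (Ne.symm hij), neg_sub]
            have hmem := SlnAux.bracket_mem_span (o := o) (n := n) (a := 1) (c := m)
              (SlnAux.stdBasis_mem (m := 1) h1 (by simp only [htv]; omega))
              (SlnAux.stdBasis_mem (m := m) h2 (by simp only [htv]; omega))
            rw [hneg] at hmem
            simpa using Submodule.neg_mem _ hmem
      · intro i hXii
        have hm1 : m ≤ -1 := by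
          by_contra h
          exact hXii (hX' i i (by omega))
        have h := SlnAux.diag_chain_mem (o := o) hn0 (le_refl (1 : ℤ)) hm1 (i : ℕ) i.isLt
        simpa using h
  · apply le_antisymm
    · rw [Submodule.span_le]
      rintro z ⟨X, hX, Y, hY, rfl⟩
      have h := SlnAux.bracket_mem_filtration hX hY
      rwa [show (0 : ℤ) + (1 - (n : ℤ)) = 1 - n by ring] at h
    · intro X hX
      obtain ⟨htr, -⟩ := hX
      refine SlnAux.mem_of_pieces hn0 htr ?_ ?_
      · intro i j hij _
        have hiv : (i : ℕ) < n := i.isLt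
        have hjv : (j : ℕ) < n := j.isLt
        rcases hn with h3 | ⟨h2, hu⟩
        · obtain ⟨k, hki, hkj⟩ := SlnAux.exists_third h3 i j
          rw [← SlnAux.comm5 i j k (Ne.symm hij) hki (Ne.symm hkj)]
          exact SlnAux.bracket_mem_span (SlnAux.diagdiff_mem le_rfl i k)
            (SlnAux.stdBasis_mem hij (by omega))
        · obtain ⟨u, hu⟩ := hu
          have h2' : single i j (1 : o) = (↑u⁻¹ : o) •
              ((single i i (1 : o) - single j j 1) * single i j 1
                - single i j 1 *
                  (single i i 1 - single j j 1)) := by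
            rw [SlnAux.comm6 i j hij, smul_smul, ← hu, Units.inv_mul, one_smul]
          rw [h2']
          exact Submodule.smul_mem _ _
            (SlnAux.bracket_mem_span (SlnAux.diagdiff_mem le_rfl i j)
              (SlnAux.stdBasis_mem hij (by omega)))
      · intro i _
        have h := SlnAux.diag_chain_mem (o := o) (a := 0) (c := 1 - (n : ℤ)) hn0
          (by norm_num) (by omega) (i : ℕ) i.isLt
        simpa using h
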